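/- arXiv:2206.12819 — 5 statements merged into one kernel-verified Lean document; each statement's English description precedes it below -/
import Mathlib

section
/- Let 𝓕 be an ω-closed family of nonempty inductive subsets of ω, and let B_ℤ^𝓕 = ℤ × ℤ × 𝓕 with operation (i₁,j₁,F₁)·(i₂,j₂,F₂) = (i₁-j₁+i₂, j₂, (j₁-i₂+F₁) ∩ F₂) if j₁ ≤ i₂, and (i₁, j₁-i₂+j₂, F₁ ∩ (i₂-j₁+F₂)) if j₁ ≥ i₂. Then this operation is associative. -/
/-- A subset of ω is inductive if `i ∈ F` implies `i+1 ∈ F`. -/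
def SInd (F : Set ℕ) : Prop := ∀ i ∈ F, i + 1 ∈ F

/-- `-n + F = {k : k + n ∈ F}`. -/
def negShift (n : ℕ) (F : Set ℕ) : Set ℕ := {k : ℕ | k + n ∈ F}

/-- A family of subsets of ω is ω-closed. -/
def OmegaClosed (𝓕 : Set (Set ℕ)) : Prop :=
  ∀ n : ℕ, ∀ F₁ ∈ 𝓕, ∀ F₂ ∈ 𝓕, F₁ ∩ negShift n F₂ ∈ 𝓕

/-- `m + F = {m + k : k ∈ F} ∩ ω` for `m : ℤ`. -/
def zshift (m : ℤ) (F : Set ℕ) : Set ℕ := {x : ℕ | ∃ k ∈ F, (x : ℤ) = m + k}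

/-- The semigroup operation on `B_ℤ^𝓕 ⊆ ℤ × ℤ × Set ℕ`. -/
def BZFop (a b : ℤ × ℤ × Set ℕ) : ℤ × ℤ × Set ℕ :=
  if a.2.1 ≤ b.1 then
    (a.1 - a.2.1 + b.1, b.2.1, zshift (a.2.1 - b.1) a.2.2 ∩ b.2.2)
  else
    (a.1, a.2.1 - b.1 + b.2.1, a.2.2 ∩ zshift (b.1 - a.2.1) b.2.2)

/-- Integer upper set intersected with ℕ. -/
def SI (a : ℤ) : Set ℕ := {x : ℕ | a ≤ (x : ℤ)}

lemma SI_inter (a b : ℤ) : SI a ∩ SI b = SI (max a b) := by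
  ext x; simp [SI, max_le_iff]

lemma zshift_SI (m a : ℤ) (ha : 0 ≤ a) : zshift m (SI a) = SI (m + a) := by
  ext x
  simp only [zshift, SI, Set.mem_setOf_eq]
  constructor
  · rintro ⟨k, hk, he⟩; omega
  · intro h
    refine ⟨(x - m).toNat, ?_, ?_⟩
    · show a ≤ ((x - m).toNat : ℤ); omega
    · omega

lemma ex_SI (F : Set ℕ) (hne : F.Nonempty) (hind : SInd F) : ∃ a : ℕ, F = SI (a : ℤ) := by
  refine ⟨sInf F, ?_⟩
  have hmem : sInf F ∈ F := Nat.sInf_mem hne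
  have hstep : ∀ d : ℕ, sInf F + d ∈ F := by
    intro d
    induction d with
    | zero => simpa using hmem
    | succ n ih => exact Nat.add_succ (sInf F) n ▸ hind _ ih
  ext x
  simp only [SI, Set.mem_setOf_eq, Nat.cast_le]
  constructor
  · intro hx; exact_mod_cast Nat.sInf_le hx
  · intro hx
    have hx' : sInf F ≤ x := by exact_mod_cast hx
    have := hstep (x - sInf F)
    rwa [Nat.add_sub_cancel' hx'] at this

lemma BZFop_SI (i1 j1 i2 j2 a b : ℤ) (ha : 0 ≤ a) (hb : 0 ≤ b) :
    BZFop (i1, j1, SI a) (i2, j2, SI b) =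
      (i1 - j1 + max j1 i2, j2 - i2 + max j1 i2,
        SI (max (a + j1 - max j1 i2) (b + i2 - max j1 i2))) := by
  unfold BZFop
  dsimp only
  split_ifs with h
  · rw [zshift_SI _ _ ha, SI_inter]
    simp only [Prod.mk.injEq]
    refine ⟨by omega, by omega, congrArg SI (by omega)⟩
  · rw [zshift_SI _ _ hb, SI_inter]
    simp only [Prod.mk.injEq]
    refine ⟨by omega, by omega, congrArg SI (by omega)⟩

/-- For an ω-closed family `𝓕` of nonempty inductive subsets of ω, the
operation of `B_ℤ^𝓕` is associative. -/
theorem stmt7 (𝓕 : Set (Set ℕ)) (hcl : OmegaClosed 𝓕)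
    (hmem : ∀ F ∈ 𝓕, F.Nonempty ∧ SInd F) :
    ∀ a b c : ℤ × ℤ × Set ℕ, a.2.2 ∈ 𝓕 → b.2.2 ∈ 𝓕 → c.2.2 ∈ 𝓕 →
      BZFop (BZFop a b) c = BZFop a (BZFop b c) := by
  rintro ⟨i1, j1, F1⟩ ⟨i2, j2, F2⟩ ⟨i3, j3, F3⟩ h1 h2 h3
  obtain ⟨a1, rfl⟩ := ex_SI F1 (hmem F1 h1).1 (hmem F1 h1).2
  obtain ⟨a2, rfl⟩ := ex_SI F2 (hmem F2 h2).1 (hmem F2 h2).2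
  obtain ⟨a3, rfl⟩ := ex_SI F3 (hmem F3 h3).1 (hmem F3 h3).2
  rw [BZFop_SI i1 j1 i2 j2 _ _ (by positivity) (by positivity),
      BZFop_SI _ _ i3 j3 _ _ (by omega) (by positivity),
      BZFop_SI i2 j2 i3 j3 _ _ (by positivity) (by positivity),
      BZFop_SI i1 j1 _ _ _ _ (by positivity) (by omega)]
  simp only [Prod.mk.injEq]
  refine ⟨by omega, by omega, congrArg SI (by omega)⟩
end

section
/- In the semigroup B_ℤ^𝓕 with 𝓕 an ω-closed family of nonempty inductive subsets of ω, every element (i,j,F) has a unique inverse in the sense of inverse semigroups, namely (j,i,F): (i,j,F)·(j,i,F)·(i,j,F) = (i,j,F) and (j,i,F)·(i,j,F)·(j,i,F) = (j,i,F), and no other element has these two properties. -/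
/-- In `B_ℤ^𝓕`, the element `(i,j,F)` has `(j,i,F)` as its unique
inverse in the sense of inverse semigroups. -/
theorem stmt9 (𝓕 : Set (Set ℕ)) (hcl : OmegaClosed 𝓕)
    (hmem : ∀ F ∈ 𝓕, F.Nonempty ∧ SInd F)
    (i j : ℤ) (F : Set ℕ) (hF : F ∈ 𝓕) :
    BZFop (BZFop (i, j, F) (j, i, F)) (i, j, F) = (i, j, F) ∧
    BZFop (BZFop (j, i, F) (i, j, F)) (j, i, F) = (j, i, F) ∧
    ∀ y : ℤ × ℤ × Set ℕ, y.2.2 ∈ 𝓕 →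
      BZFop (BZFop (i, j, F) y) (i, j, F) = (i, j, F) →
      BZFop (BZFop y (i, j, F)) y = y →
      y = (j, i, F) := by
  have zz : ∀ S : Set ℕ, zshift 0 S = S := by
    intro S; ext x; simp [zshift]
  have sand : ∀ a : ℤ, ∀ S T : Set ℕ, BZFop (a, a, S) (a, j, T)
      = (a, j, S ∩ T) := by
    intro a S T; simp [BZFop, zz]
  refine ⟨?_, ?_, ?_⟩
  · have e1 : BZFop (i, j, F) (j, i, F) = (i, i, F) := by
      simp [BZFop, zz]
    rw [e1]; simp [BZFop, zz]
  · have e1 : BZFop (j, i, F) (i, j, F) = (j, j, F) := by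
      simp [BZFop, zz]
    rw [e1]; simp [BZFop, zz]
  · rintro ⟨p, q, G⟩ hG h1 h2
    rcases le_or_gt j p with hjp | hjp
    · have e1 : BZFop (i, j, F) (p, q, G)
          = (i - j + p, q, zshift (j - p) F ∩ G) := by
        simp [BZFop, hjp]
      rw [e1] at h1
      rcases le_or_gt q i with hqi | hqi
      · have e2 : BZFop ((i - j + p : ℤ), q, zshift (j - p) F ∩ G) (i, j, F)
            = (i - j + p - q + i, j, zshift (q - i) (zshift (j - p) F ∩ G) ∩ F) := by
          simp [BZFop, hqi]
        rw [e2] at h1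
        simp only [Prod.mk.injEq] at h1
        obtain ⟨hA, _, hC⟩ := h1
        have hp : j = p := by omega
        have hq : i = q := by omega
        subst hp; subst hq
        simp only [sub_self, zz] at hC
        -- hC : F ∩ G ∩ F = F
        have hFG : F ⊆ G := by
          intro x hx
          exact ((Set.ext_iff.mp hC x).mpr hx).1.2
        -- now compute h2
        have e3 : BZFop (j, i, G) (i, j, F) = (j, j, G ∩ F) := by
          simp [BZFop, zz]
        rw [e3] at h2
        have e4 : BZFop ((j : ℤ), j, G ∩ F) (j, i, G) = (j, i, G ∩ F ∩ G) := by
          simp [BZFop, zz]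
        rw [e4] at h2
        simp only [Prod.mk.injEq] at h2
        obtain ⟨_, _, hC2⟩ := h2
        have hGF : G ⊆ F := by
          intro x hx
          exact ((Set.ext_iff.mp hC2 x).mpr hx).1.2
        have : G = F := Set.Subset.antisymm hGF hFG
        rw [this]
      · have e2 : BZFop ((i - j + p : ℤ), q, zshift (j - p) F ∩ G) (i, j, F)
            = (i - j + p, q - i + j, (zshift (j - p) F ∩ G) ∩ zshift (i - q) F) := by
          simp [BZFop, not_le.mpr hqi]
        rw [e2] at h1
        simp only [Prod.mk.injEq] at h1
        omega
    · have e1 : BZFop (i, j, F) (p, q, G)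
          = (i, j - p + q, F ∩ zshift (p - j) G) := by
        simp [BZFop, not_le.mpr hjp]
      rw [e1] at h1
      rcases le_or_gt (j - p + q) i with h' | h'
      · have e2 : BZFop ((i : ℤ), j - p + q, F ∩ zshift (p - j) G) (i, j, F)
            = (i - (j - p + q) + i, j, zshift ((j - p + q) - i) (F ∩ zshift (p - j) G) ∩ F) := by
          simp [BZFop, h']
        rw [e2] at h1
        simp only [Prod.mk.injEq] at h1
        have hqi : q ≤ i := by omega
        -- compute h2 for contradiction
        have e3 : BZFop (p, q, G) (i, j, F)
            = (p - q + i, j, zshift (q - i) G ∩ F) := by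
          simp [BZFop, hqi]
        rw [e3] at h2
        have e4 : BZFop ((p - q + i : ℤ), j, zshift (q - i) G ∩ F) (p, q, G)
            = (p - q + i, j - p + q, (zshift (q - i) G ∩ F) ∩ zshift (p - j) G) := by
          simp [BZFop, not_le.mpr hjp]
        rw [e4] at h2
        simp only [Prod.mk.injEq] at h2
        omega
      · have e2 : BZFop ((i : ℤ), j - p + q, F ∩ zshift (p - j) G) (i, j, F)
            = (i, (j - p + q) - i + j, (F ∩ zshift (p - j) G) ∩ zshift (i - (j - p + q)) F) := by
          simp [BZFop, not_le.mpr h']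
        rw [e2] at h1
        simp only [Prod.mk.injEq] at h1
        omega
end

section
/- Let 𝓕 be an ω-closed family of nonempty inductive subsets of ω with [0) ∈ 𝓕, and fix k ∈ ℤ. Then the set {(i,j,[p)) ∈ B_ℤ^𝓕 : i ≥ k and j ≥ k} equals (k,k,[0))·B_ℤ^𝓕 ∩ B_ℤ^𝓕·(k,k,[0)), and it is a subsemigroup of B_ℤ^𝓕. -/
lemma zshift_Ici (m : ℤ) (hm : m ≤ 0) : zshift m (Set.Ici 0) = Set.univ := by
  ext x
  simp only [zshift, Set.mem_setOf_eq, Set.mem_univ, iff_true]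
  exact ⟨((x : ℤ) - m).toNat, Set.mem_Ici.2 (Nat.zero_le _), by omega⟩

lemma zshift_neg (m : ℤ) (hm : m ≤ 0) (F : Set ℕ) :
    zshift m F = negShift (-m).toNat F := by
  ext x
  simp only [zshift, negShift, Set.mem_setOf_eq]
  constructor
  · rintro ⟨c, hc, hx⟩
    have : x + (-m).toNat = c := by omega
    rwa [this]
  · intro h
    exact ⟨x + (-m).toNat, h, by omega⟩

lemma zshift_zero (F : Set ℕ) : zshift 0 F = F := by
  ext x
  simp only [zshift, Set.mem_setOf_eq]
  constructor
  · intro h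
    obtain ⟨c, hc, hx⟩ := h
    have hxc : x = c := by omega
    rwa [hxc]
  · intro h
    exact ⟨x, h, by omega⟩

lemma Ici_zero_univ : Set.Ici (0 : ℕ) = Set.univ := by
  ext x; simp [Nat.zero_le]

/-- For `[0) ∈ 𝓕` and `k : ℤ`, the set `{(i,j,F) : i ≥ k, j ≥ k}`
equals `(k,k,[0))·B_ℤ^𝓕 ∩ B_ℤ^𝓕·(k,k,[0))` and is a subsemigroup. -/
theorem stmt10 (𝓕 : Set (Set ℕ)) (hcl : OmegaClosed 𝓕)
    (hmem : ∀ F ∈ 𝓕, F.Nonempty ∧ SInd F)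
    (h0 : Set.Ici (0 : ℕ) ∈ 𝓕) (k : ℤ) :
    ({a : ℤ × ℤ × Set ℕ | a.2.2 ∈ 𝓕 ∧ k ≤ a.1 ∧ k ≤ a.2.1} =
      {x : ℤ × ℤ × Set ℕ |
          ∃ t : ℤ × ℤ × Set ℕ, t.2.2 ∈ 𝓕 ∧ x = BZFop (k, k, Set.Ici 0) t} ∩
      {x : ℤ × ℤ × Set ℕ |
          ∃ t : ℤ × ℤ × Set ℕ, t.2.2 ∈ 𝓕 ∧ x = BZFop t (k, k, Set.Ici 0)}) ∧
    ∀ a b : ℤ × ℤ × Set ℕ,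
      a ∈ {a : ℤ × ℤ × Set ℕ | a.2.2 ∈ 𝓕 ∧ k ≤ a.1 ∧ k ≤ a.2.1} →
      b ∈ {a : ℤ × ℤ × Set ℕ | a.2.2 ∈ 𝓕 ∧ k ≤ a.1 ∧ k ≤ a.2.1} →
      BZFop a b ∈ {a : ℤ × ℤ × Set ℕ | a.2.2 ∈ 𝓕 ∧ k ≤ a.1 ∧ k ≤ a.2.1} := by
  constructor
  · ext ⟨i, j, F⟩
    simp only [Set.mem_setOf_eq, Set.mem_inter_iff]
    constructor
    · rintro ⟨hF, hi, hj⟩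
      refine ⟨⟨(i, j, F), hF, ?_⟩, ⟨(i, j, F), hF, ?_⟩⟩
      · have hb : BZFop (k, k, (Set.Ici 0 : Set ℕ)) (i, j, F)
            = (k - k + i, j, zshift (k - i) (Set.Ici 0) ∩ F) := by
          unfold BZFop
          exact if_pos hi
        rw [hb, zshift_Ici (k - i) (by omega), Set.univ_inter, sub_self, zero_add]
      · by_cases hjk : j ≤ k
        · have hjk' : j = k := le_antisymm hjk hj
          subst hjk'
          have hb : BZFop (i, j, F) (j, j, (Set.Ici 0 : Set ℕ))
              = (i - j + j, j, zshift (j - j) F ∩ Set.Ici 0) := by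
            unfold BZFop
            exact if_pos le_rfl
          rw [hb, sub_self, zshift_zero, Ici_zero_univ, Set.inter_univ,
            sub_add_cancel]
        · have hb : BZFop (i, j, F) (k, k, (Set.Ici 0 : Set ℕ))
              = (i, j - k + k, F ∩ zshift (k - j) (Set.Ici 0)) := by
            unfold BZFop
            exact if_neg hjk
          rw [hb, zshift_Ici (k - j) (by omega), Set.inter_univ, sub_add_cancel]
    · rintro ⟨⟨t, ht, hx⟩, ⟨s, hs, hx'⟩⟩
      have h1 : F ∈ 𝓕 ∧ k ≤ i := by
        unfold BZFop at hx
        have hcnd : ((k : ℤ), (k : ℤ), (Set.Ici 0 : Set ℕ)).2.1 = k := rfl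
        split_ifs at hx with h
        · rw [hcnd] at h
          simp only [Prod.mk.injEq] at hx
          obtain ⟨hx1, hx2, hx3⟩ := hx
          refine ⟨?_, by omega⟩
          rw [hx3, zshift_Ici (k - t.1) (by omega), Set.univ_inter]
          exact ht
        · rw [hcnd] at h
          simp only [Prod.mk.injEq] at hx
          obtain ⟨hx1, hx2, hx3⟩ := hx
          refine ⟨?_, by omega⟩
          rw [hx3, zshift_neg (t.1 - k) (by omega)]
          exact hcl _ _ h0 _ ht
      have h2 : k ≤ j := by
        unfold BZFop at hx'
        have hcnd : ((k : ℤ), (k : ℤ), (Set.Ici 0 : Set ℕ)).1 = k := rfl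
        have hcnd2 : ((k : ℤ), (k : ℤ), (Set.Ici 0 : Set ℕ)).2.1 = k := rfl
        split_ifs at hx' with h
        · rw [hcnd] at h
          simp only [Prod.mk.injEq, hcnd2] at hx'
          omega
        · rw [hcnd] at h
          simp only [Prod.mk.injEq, hcnd, hcnd2] at hx'
          omega
      exact ⟨h1.1, h1.2, h2⟩
  · rintro a b ⟨haF, hai, haj⟩ ⟨hbF, hbi, hbj⟩
    simp only [Set.mem_setOf_eq]
    unfold BZFop
    split_ifs with h
    · refine ⟨?_, ?_, ?_⟩
      · show zshift (a.2.1 - b.1) a.2.2 ∩ b.2.2 ∈ 𝓕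
        rw [zshift_neg (a.2.1 - b.1) (by omega), Set.inter_comm]
        exact hcl _ _ hbF _ haF
      · show k ≤ a.1 - a.2.1 + b.1
        omega
      · show k ≤ b.2.1
        omega
    · refine ⟨?_, ?_, ?_⟩
      · show a.2.2 ∩ zshift (b.1 - a.2.1) b.2.2 ∈ 𝓕
        rw [zshift_neg (b.1 - a.2.1) (by omega)]
        exact hcl _ _ haF _ hbF
      · show k ≤ a.1
        omega
      · show k ≤ a.2.1 - b.1 + b.2.1
        omega
end

section
/- In the semigroup B_ℤ^𝓕 with 𝓕 an ω-closed family of nonempty inductive subsets of ω, the natural partial order on idempotents satisfies: (i,i,[p)) ≼ (j,j,[q)) if and only if i ≥ j and [p) ⊆ (j - i) + [q), i.e., i ≥ j and i + p ≥ j + q. -/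
lemma key (i j : ℤ) (p q : ℕ) (hji : j ≤ i) :
    Set.Ici p ⊆ zshift (j - i) (Set.Ici q) ↔ j + (q : ℤ) ≤ i + (p : ℤ) := by
  constructor
  · intro h
    obtain ⟨k, hk, hpk⟩ := h (Set.self_mem_Ici)
    have : (q : ℤ) ≤ (k : ℤ) := by exact_mod_cast hk
    omega
  · intro h x hx
    have hx' : (p : ℤ) ≤ (x : ℤ) := by exact_mod_cast hx
    refine ⟨(i - j + x).toNat, ?_, ?_⟩
    · simp only [Set.mem_Ici]
      omega
    · omega

/-- The natural partial order on idempotents of `B_ℤ^𝓕`: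
`(i,i,[p)) ≼ (j,j,[q))` iff `i ≥ j` and `i + p ≥ j + q`. -/
theorem stmt14 (i j : ℤ) (p q : ℕ) :
    (BZFop (i, i, Set.Ici p) (j, j, Set.Ici q) = (i, i, Set.Ici p) ∧
     BZFop (j, j, Set.Ici q) (i, i, Set.Ici p) = (i, i, Set.Ici p)) ↔
    (j ≤ i ∧ j + (q : ℤ) ≤ i + (p : ℤ)) := by
  constructor
  · rintro ⟨h1, h2⟩
    simp only [BZFop, Prod.mk.injEq] at h1 h2
    split_ifs at h1 h2 with hij hji hji2 hji3 <;>
      simp only [Prod.mk.injEq] at h1 h2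
    · obtain ⟨ha, hb, hs⟩ := h2
      rw [Set.inter_eq_right] at hs
      exact ⟨hji, (key i j p q hji).mp hs⟩
    · obtain ⟨h2a, h2b, h2c⟩ := h2
      omega
    · obtain ⟨ha, hb, hs⟩ := h2
      rw [Set.inter_eq_right] at hs
      exact ⟨hji2, (key i j p q hji2).mp hs⟩
    · obtain ⟨h2a, h2b, h2c⟩ := h2
      omega
  · rintro ⟨hji, hpq⟩
    have hs := (key i j p q hji).mpr hpq
    refine ⟨?_, ?_⟩ <;> simp only [BZFop] <;> split_ifs with h <;>
      simp only [Prod.mk.injEq]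
    · have hij : i = j := le_antisymm h hji
      subst hij
      refine ⟨by omega, rfl, ?_⟩
      rw [sub_self, zshift_zero]
      exact Set.inter_eq_left.mpr (Set.Ici_subset_Ici.mpr (by omega))
    · exact ⟨trivial, by omega, Set.inter_eq_left.mpr hs⟩
    · exact ⟨by omega, trivial, Set.inter_eq_right.mpr hs⟩
end

section
/- Fix a positive integer k and let 𝓕 = {[0), [1), ..., [k)}. The map ã : B_ℤ^𝓕 → B_ℤ^𝓕 defined by ã(i,j,[s)) = (i+s, j+s, [k−s)) for s = 0, 1, ..., k and i, j ∈ ℤ is an automorphism of the semigroup B_ℤ^𝓕. -/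
/-- The map `ã : (i,j,[s)) ↦ (i+s, j+s, [k-s))` on `B_ℤ^𝓕` for
`𝓕 = {[0),…,[k)}` (here `sInf F` recovers `s` from `F = [s)`). -/
noncomputable def taMap (k : ℕ) (a : ℤ × ℤ × Set ℕ) : ℤ × ℤ × Set ℕ :=
  (a.1 + ((sInf a.2.2 : ℕ) : ℤ), a.2.1 + ((sInf a.2.2 : ℕ) : ℤ),
    Set.Ici (k - sInf a.2.2))

lemma my_sInf_Ici (s : ℕ) : sInf (Set.Ici s) = s := csInf_Ici

lemma my_zshift_Ici (m : ℤ) (s : ℕ) : zshift m (Set.Ici s) = Set.Ici (m + s).toNat := by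
  ext x
  simp only [zshift, Set.mem_setOf_eq, Set.mem_Ici]
  constructor
  · rintro ⟨c, hc, hx⟩
    omega
  · intro h
    exact ⟨((x : ℤ) - m).toNat, by omega, by omega⟩

lemma my_Ici_inter (u v : ℕ) : Set.Ici u ∩ Set.Ici v = Set.Ici (max u v) := by
  ext x; simp only [Set.mem_inter_iff, Set.mem_Ici]; omega

lemma my_Ici_inj {u v : ℕ} (h : Set.Ici u = Set.Ici v) : u = v := by
  have h1 : u ∈ Set.Ici v := h ▸ Set.self_mem_Ici
  have h2 : v ∈ Set.Ici u := h.symm ▸ Set.self_mem_Ici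
  simp [Set.mem_Ici] at h1 h2; omega

lemma taMap_mk (k s : ℕ) (i j : ℤ) :
    taMap k (i, j, Set.Ici s) = (i + s, j + s, Set.Ici (k - s)) := by
  simp [taMap, my_sInf_Ici]

/-- For `𝓕 = {[0),…,[k)}`, the map `ã(i,j,[s)) = (i+s, j+s, [k−s))` is an
automorphism of the semigroup `B_ℤ^𝓕`. -/
theorem stmt17 (k : ℕ) (hk : 0 < k) :
    Set.BijOn (taMap k) {a : ℤ × ℤ × Set ℕ | ∃ s ≤ k, a.2.2 = Set.Ici s}
      {a : ℤ × ℤ × Set ℕ | ∃ s ≤ k, a.2.2 = Set.Ici s} ∧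
    ∀ a b : ℤ × ℤ × Set ℕ,
      (∃ s ≤ k, a.2.2 = Set.Ici s) → (∃ s ≤ k, b.2.2 = Set.Ici s) →
      taMap k (BZFop a b) = BZFop (taMap k a) (taMap k b) := by
  constructor
  · refine ⟨?_, ?_, ?_⟩
    · rintro ⟨i, j, F⟩ ⟨s, hs, hF⟩
      subst hF
      rw [taMap_mk]
      exact ⟨k - s, by omega, rfl⟩
    · rintro ⟨i1, j1, F1⟩ ⟨s, hs, hF1⟩ ⟨i2, j2, F2⟩ ⟨t, ht, hF2⟩ h
      subst hF1; subst hF2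
      rw [taMap_mk, taMap_mk] at h
      have e1 : i1 + (s:ℤ) = i2 + t := congrArg Prod.fst h
      have e3 : Set.Ici (k - s) = Set.Ici (k - t) := congrArg (fun p => p.2.2) h
      have e2 : j1 + (s:ℤ) = j2 + t := congrArg (fun p => p.2.1) h
      have hst : s = t := by have := my_Ici_inj e3; omega
      subst hst
      have hi : i1 = i2 := by omega
      have hj : j1 = j2 := by omega
      rw [hi, hj]
    · rintro ⟨i, j, F⟩ ⟨s, hs, hF⟩
      subst hF
      refine ⟨(i - (k - s : ℕ), j - (k - s : ℕ), Set.Ici (k - s)), ⟨k - s, by omega, rfl⟩, ?_⟩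
      rw [taMap_mk]
      have h1 : k - (k - s) = s := by omega
      simp [h1]
  · rintro ⟨i1, j1, F1⟩ ⟨i2, j2, F2⟩ ⟨s, hs, hF1⟩ ⟨t, ht, hF2⟩
    subst hF1; subst hF2
    simp only [BZFop, taMap_mk, my_zshift_Ici, my_Ici_inter]
    split_ifs with h1 h2 h2 <;>
      simp only [taMap_mk, my_zshift_Ici, my_Ici_inter] <;>
      refine Prod.ext ?_ (Prod.ext ?_ ?_) <;>
      simp only [] <;>
      first
        | omega
        | exact congrArg Set.Ici (by omega)
end
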